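/- If f and g are probability density functions on ℝ with full support such that f(x)/g(x) is strictly increasing in x (strict monotone likelihood ratio property), then the distribution with density f first-order stochastically dominates the one with density g; i.e., for every x, ∫_{-∞}^x f ≤ ∫_{-∞}^x g, with strict inequality for some x. -/
import Mathlib


open MeasureTheory

lemma pos_setIntegral_aux (h : ℝ → ℝ) (hmeas : Measurable h) (s : Set ℝ)
    (hs : MeasurableSet s) (hvol : volume s = ⊤)
    (hint : IntegrableOn h s) (hpos : ∀ t ∈ s, 0 < h t) :
    0 < ∫ t in s, h t := by
  have hnn : 0 ≤ᵐ[volume.restrict s] h := by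
    filter_upwards [ae_restrict_mem hs] with t ht using (hpos t ht).le
  rw [setIntegral_pos_iff_support_of_nonneg_ae hnn hint]
  have hsub : s ⊆ Function.support h ∩ s := fun t ht =>
    ⟨(hpos t ht).ne', ht⟩
  have := measure_mono (μ := volume) hsub
  rw [hvol] at this
  simpa using lt_of_lt_of_le (by simp : (0:ENNReal) < ⊤) this

/-- Strict MLRP implies first-order stochastic dominance. -/
theorem mlrp_implies_fosd
    (f g : ℝ → ℝ)
    (hf_meas : Measurable f) (hg_meas : Measurable g)
    (hf_pos : ∀ x, 0 < f x) (hg_pos : ∀ x, 0 < g x)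
    (hf_int : Integrable f) (hg_int : Integrable g)
    (hf_one : ∫ x, f x = 1) (hg_one : ∫ x, g x = 1)
    (hmlrp : StrictMono (fun x => f x / g x)) :
    (∀ x : ℝ, ∫ t in Set.Iic x, f t ≤ ∫ t in Set.Iic x, g t) ∧
    (∃ x : ℝ, ∫ t in Set.Iic x, f t < ∫ t in Set.Iic x, g t) := by
  have key : ∀ x : ℝ, ∫ t in Set.Iic x, f t < ∫ t in Set.Iic x, g t := by
    intro x
    by_cases h : f x ≤ g x
    · -- f < g on Iio x
      have hlt : ∀ t ∈ Set.Iio x, 0 < g t - f t := by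
        intro t ht
        have h1 : f t / g t < f x / g x := hmlrp ht
        have h2 : f x / g x ≤ 1 := (div_le_one (hg_pos x)).mpr h
        have h3 : f t < g t := (div_lt_one (hg_pos t)).mp (lt_of_lt_of_le h1 h2)
        linarith
      have hpos : 0 < ∫ t in Set.Iio x, (g t - f t) :=
        pos_setIntegral_aux _ (hg_meas.sub hf_meas) _ measurableSet_Iio
          (by simp [Real.volume_Iio]) (hg_int.sub hf_int).integrableOn hlt
      rw [integral_sub hg_int.integrableOn hf_int.integrableOn] at hpos
      rw [← integral_Iic_eq_integral_Iio, ← integral_Iic_eq_integral_Iio] at hpos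
      linarith
    · -- g < f on Ioi x
      push_neg at h
      have hlt : ∀ t ∈ Set.Ioi x, 0 < f t - g t := by
        intro t ht
        have h1 : f x / g x < f t / g t := hmlrp ht
        have h2 : 1 < f x / g x := (one_lt_div (hg_pos x)).mpr h
        have h3 : g t < f t := (one_lt_div (hg_pos t)).mp (lt_trans h2 h1)
        linarith
      have hpos : 0 < ∫ t in Set.Ioi x, (f t - g t) :=
        pos_setIntegral_aux _ (hf_meas.sub hg_meas) _ measurableSet_Ioi
          (by simp [Real.volume_Ioi]) (hf_int.sub hg_int).integrableOn hlt
      rw [integral_sub hf_int.integrableOn hg_int.integrableOn] at hpos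
      have hf_split := integral_add_compl (measurableSet_Iic (a := x)) hf_int (μ := volume)
      have hg_split := integral_add_compl (measurableSet_Iic (a := x)) hg_int (μ := volume)
      rw [Set.compl_Iic, hf_one] at hf_split
      rw [Set.compl_Iic, hg_one] at hg_split
      linarith
  exact ⟨fun x => (key x).le, ⟨0, key 0⟩⟩
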